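/- Let z₁, z₂ ∈ ℂ with z₁ ≠ z₂, and define 2×2 complex matrices A, B, C by A_{ij} = exp(π z_i \overline{z_j}), B_{ij} = π \overline{z_j} exp(π z_i \overline{z_j}), C_{ij} = (π² z_i \overline{z_j} + π) exp(π z_i \overline{z_j}) for i,j ∈ {1,2}. Then A is invertible, and with M := C - B A^{-1} B* (B* the conjugate transpose of B) and per(M) := M_{11}M_{22} + M_{12}M_{21}, one has per(M)/det(πA) = 1 - φ(π|z₁-z₂|²), where φ(u) = (e^{-u}(-2+4u-u²) + e^{-2u}(4-4u-u²) - 2e^{-3u})/(1-e^{-u})³. -/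

import Mathlib

/-- The radial profile `φ` of the truncated pair correlation. -/
noncomputable def phi (u : ℝ) : ℝ :=
  (Real.exp (-u) * (-2 + 4*u - u^2) + Real.exp (-2*u) * (4 - 4*u - u^2)
    - 2 * Real.exp (-3*u)) / (1 - Real.exp (-u))^3

set_option maxHeartbeats 4000000 in
lemma key_scalar (L a b al be es et etp ep x d m00 m01 m10 m11 : ℂ)
    (hL : L ≠ 0) (hxm1 : x - 1 ≠ 0) (hd0 : d ≠ 0)
    (hrel : es * ep = et * etp * x)
    (hd : d = et * etp * (x - 1))
    (h00 : m00 * d = (((L^2*a*al+L)*es)*d - ((L*al*es)*ep*(L*a*es) + (L*al*es)*(-et)*(L*b*etp) + (L*be*et)*(-etp)*(L*a*es) + (L*be*et)*es*(L*b*etp))))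
    (h01 : m01 * d = (((L^2*a*be+L)*et)*d - ((L*al*es)*ep*(L*a*et) + (L*al*es)*(-et)*(L*b*ep) + (L*be*et)*(-etp)*(L*a*et) + (L*be*et)*es*(L*b*ep))))
    (h10 : m10 * d = (((L^2*b*al+L)*etp)*d - ((L*al*etp)*ep*(L*a*es) + (L*al*etp)*(-et)*(L*b*etp) + (L*be*ep)*(-etp)*(L*a*es) + (L*be*ep)*es*(L*b*etp))))
    (h11 : m11 * d = (((L^2*b*be+L)*ep)*d - ((L*al*etp)*ep*(L*a*et) + (L*al*etp)*(-et)*(L*b*ep) + (L*be*ep)*(-etp)*(L*a*et) + (L*be*ep)*es*(L*b*ep)))) :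
    (m00 * m11 + m01 * m10) / (L^2 * d) =
      1 - (x^2*(-2+4*(L*(a-b)*(al-be))-(L*(a-b)*(al-be))^2)
        + x*(4-4*(L*(a-b)*(al-be))-(L*(a-b)*(al-be))^2) - 2)/(x-1)^3 := by
  have hx3 : (x-1)^3 ≠ 0 := pow_ne_zero 3 hxm1
  have hLd : L^2 * d ≠ 0 := mul_ne_zero (pow_ne_zero 2 hL) hd0
  have key2 : (m00 * m11 + m01 * m10) * (x-1)^3 * d^2 =
      ((x-1)^3 - (x^2*(-2+4*(L*(a-b)*(al-be))-(L*(a-b)*(al-be))^2)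
        + x*(4-4*(L*(a-b)*(al-be))-(L*(a-b)*(al-be))^2) - 2)) * (L^2*d) * d^2 := by
    linear_combination (m11*(x-1)^3*d) * h00 + ((((L^2*a*al+L)*es)*d - ((L*al*es)*ep*(L*a*es) + (L*al*es)*(-et)*(L*b*etp) + (L*be*et)*(-etp)*(L*a*es) + (L*be*et)*es*(L*b*etp)))*(x-1)^3) * h11
      + (m10*(x-1)^3*d) * h01 + ((((L^2*a*be+L)*et)*d - ((L*al*es)*ep*(L*a*et) + (L*al*es)*(-et)*(L*b*ep) + (L*be*et)*(-etp)*(L*a*et) + (L*be*et)*es*(L*b*ep)))*(x-1)^3) * h10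
      + ((-1)*L^2*d^2 + (1)*L^2*x*d^2 + (1)*L^2*x^2*d^2 + (-1)*L^2*x^3*d^2 + (1)*L^2*et*etp*x*d + (-3)*L^2*et*etp*x^2*d + (3)*L^2*et*etp*x^3*d + (-1)*L^2*et*etp*x^4*d + (-1)*L^2*et^2*etp^2*x + (4)*L^2*et^2*etp^2*x^2 + (-6)*L^2*et^2*etp^2*x^3 + (4)*L^2*et^2*etp^2*x^4 + (-1)*L^2*et^2*etp^2*x^5 + (-1)*L^2*es*ep*d + (3)*L^2*es*ep*x*d + (-3)*L^2*es*ep*x^2*d + (1)*L^2*es*ep*x^3*d + (1)*L^2*es*et*etp*ep + (-4)*L^2*es*et*etp*ep*x + (6)*L^2*es*et*etp*ep*x^2 + (-4)*L^2*es*et*etp*ep*x^3 + (1)*L^2*es*et*etp*ep*x^4 + (-4)*L^3*b*be*x*d^2 + (4)*L^3*b*be*x^2*d^2 + (4)*L^3*b*be*et*etp*x*d + (-8)*L^3*b*be*et*etp*x^2*d + (4)*L^3*b*be*et*etp*x^3*d + (-4)*L^3*b*be*et^2*etp^2*x + (12)*L^3*b*be*et^2*etp^2*x^2 + (-12)*L^3*b*be*et^2*etp^2*x^3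 + (4)*L^3*b*be*et^2*etp^2*x^4 + (-1)*L^3*b*be*es*ep*d + (3)*L^3*b*be*es*ep*x*d + (-3)*L^3*b*be*es*ep*x^2*d + (1)*L^3*b*be*es*ep*x^3*d + (4)*L^3*b*be*es*et*etp*ep + (-13)*L^3*b*be*es*et*etp*ep*x + (15)*L^3*b*be*es*et*etp*ep*x^2 + (-7)*L^3*b*be*es*et*etp*ep*x^3 + (1)*L^3*b*be*es*et*etp*ep*x^4 + (1)*L^3*b*be*es^2*ep^2 + (-3)*L^3*b*be*es^2*ep^2*x + (3)*L^3*b*be*es^2*ep^2*x^2 + (-1)*L^3*b*be*es^2*ep^2*x^3 + (4)*L^3*b*al*x*d^2 + (-4)*L^3*b*al*x^2*d^2 + (-1)*L^3*b*al*et*etp*d + (-1)*L^3*b*al*et*etp*x*d + (5)*L^3*b*al*et*etp*x^2*d + (-3)*L^3*b*al*et*etp*x^3*d + (3)*L^3*b*al*et^2*etp^2*x + (-9)*L^3*b*al*et^2*etp^2*x^2 + (9)*L^3*b*al*et^2*etp^2*x^3 + (-3)*L^3*b*al*et^2*etp^2*x^4 + (-3)*L^3*b*al*es*et*etp*ep +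 (9)*L^3*b*al*es*et*etp*ep*x + (-9)*L^3*b*al*es*et*etp*ep*x^2 + (3)*L^3*b*al*es*et*etp*ep*x^3 + (4)*L^3*a*be*x*d^2 + (-4)*L^3*a*be*x^2*d^2 + (-1)*L^3*a*be*et*etp*d + (-1)*L^3*a*be*et*etp*x*d + (5)*L^3*a*be*et*etp*x^2*d + (-3)*L^3*a*be*et*etp*x^3*d + (3)*L^3*a*be*et^2*etp^2*x + (-9)*L^3*a*be*et^2*etp^2*x^2 + (9)*L^3*a*be*et^2*etp^2*x^3 + (-3)*L^3*a*be*et^2*etp^2*x^4 + (-3)*L^3*a*be*es*et*etp*ep + (9)*L^3*a*be*es*et*etp*ep*x + (-9)*L^3*a*be*es*et*etp*ep*x^2 + (3)*L^3*a*be*es*et*etp*ep*x^3 + (-4)*L^3*a*al*x*d^2 + (4)*L^3*a*al*x^2*d^2 + (4)*L^3*a*al*et*etp*x*d + (-8)*L^3*a*al*et*etp*x^2*d + (4)*L^3*a*al*et*etp*x^3*d + (-4)*L^3*a*al*et^2*etp^2*x + (12)*L^3*a*al*et^2*etp^2*x^2 + (-12)*L^3*a*al*et^2*etp^2*x^3 +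 (4)*L^3*a*al*et^2*etp^2*x^4 + (-1)*L^3*a*al*es*ep*d + (3)*L^3*a*al*es*ep*x*d + (-3)*L^3*a*al*es*ep*x^2*d + (1)*L^3*a*al*es*ep*x^3*d + (4)*L^3*a*al*es*et*etp*ep + (-13)*L^3*a*al*es*et*etp*ep*x + (15)*L^3*a*al*es*et*etp*ep*x^2 + (-7)*L^3*a*al*es*et*etp*ep*x^3 + (1)*L^3*a*al*es*et*etp*ep*x^4 + (1)*L^3*a*al*es^2*ep^2 + (-3)*L^3*a*al*es^2*ep^2*x + (3)*L^3*a*al*es^2*ep^2*x^2 + (-1)*L^3*a*al*es^2*ep^2*x^3 + (-1)*L^4*b^2*be^2*x*d^2 + (-1)*L^4*b^2*be^2*x^2*d^2 + (1)*L^4*b^2*be^2*et*etp*x*d + (-1)*L^4*b^2*be^2*et*etp*x^3*d + (-1)*L^4*b^2*be^2*et^2*etp^2*x + (1)*L^4*b^2*be^2*et^2*etp^2*x^2 + (1)*L^4*b^2*be^2*et^2*etp^2*x^3 + (-1)*L^4*b^2*be^2*et^2*etp^2*x^4 + (1)*L^4*b^2*be^2*es*et*etp*ep + (-3)*L^4*b^2*be^2*es*et*etp*ep*x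 + (3)*L^4*b^2*be^2*es*et*etp*ep*x^2 + (-1)*L^4*b^2*be^2*es*et*etp*ep*x^3 + (2)*L^4*b^2*al*be*x*d^2 + (2)*L^4*b^2*al*be*x^2*d^2 + (-2)*L^4*b^2*al*be*et*etp*x*d + (2)*L^4*b^2*al*be*et*etp*x^3*d + (2)*L^4*b^2*al*be*et^2*etp^2*x + (-2)*L^4*b^2*al*be*et^2*etp^2*x^2 + (-2)*L^4*b^2*al*be*et^2*etp^2*x^3 + (2)*L^4*b^2*al*be*et^2*etp^2*x^4 + (-1)*L^4*b^2*al^2*x*d^2 + (-1)*L^4*b^2*al^2*x^2*d^2 + (1)*L^4*b^2*al^2*et*etp*x*d + (-1)*L^4*b^2*al^2*et*etp*x^3*d + (-1)*L^4*b^2*al^2*et^2*etp^2*x + (1)*L^4*b^2*al^2*et^2*etp^2*x^2 + (1)*L^4*b^2*al^2*et^2*etp^2*x^3 + (-1)*L^4*b^2*al^2*et^2*etp^2*x^4 + (-1)*L^4*b^2*al^2*es*et*etp*ep + (3)*L^4*b^2*al^2*es*et*etp*ep*x + (-3)*L^4*b^2*al^2*es*et*etp*ep*x^2 + (1)*L^4*b^2*al^2*es*et*etp*ep*x^3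 + (2)*L^4*a*b*be^2*x*d^2 + (2)*L^4*a*b*be^2*x^2*d^2 + (-2)*L^4*a*b*be^2*et*etp*x*d + (2)*L^4*a*b*be^2*et*etp*x^3*d + (2)*L^4*a*b*be^2*et^2*etp^2*x + (-2)*L^4*a*b*be^2*et^2*etp^2*x^2 + (-2)*L^4*a*b*be^2*et^2*etp^2*x^3 + (2)*L^4*a*b*be^2*et^2*etp^2*x^4 + (-4)*L^4*a*b*al*be*x*d^2 + (-4)*L^4*a*b*al*be*x^2*d^2 + (-1)*L^4*a*b*al*be*et*etp*d + (7)*L^4*a*b*al*be*et*etp*x*d + (-3)*L^4*a*b*al*be*et*etp*x^2*d + (-3)*L^4*a*b*al*be*et*etp*x^3*d + (-1)*L^4*a*b*al*be*et^2*etp^2 + (-2)*L^4*a*b*al*be*et^2*etp^2*x + (4)*L^4*a*b*al*be*et^2*etp^2*x^2 + (2)*L^4*a*b*al*be*et^2*etp^2*x^3 + (-3)*L^4*a*b*al*be*et^2*etp^2*x^4 + (-1)*L^4*a*b*al*be*es*ep*d + (3)*L^4*a*b*al*be*es*ep*x*d + (-3)*L^4*a*b*al*be*es*ep*x^2*d +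 (1)*L^4*a*b*al*be*es*ep*x^3*d + (1)*L^4*a*b*al*be*es*et*etp*ep + (-4)*L^4*a*b*al*be*es*et*etp*ep*x + (6)*L^4*a*b*al*be*es*et*etp*ep*x^2 + (-4)*L^4*a*b*al*be*es*et*etp*ep*x^3 + (1)*L^4*a*b*al*be*es*et*etp*ep*x^4 + (2)*L^4*a*b*al*be*es^2*ep^2 + (-6)*L^4*a*b*al*be*es^2*ep^2*x + (6)*L^4*a*b*al*be*es^2*ep^2*x^2 + (-2)*L^4*a*b*al*be*es^2*ep^2*x^3 + (2)*L^4*a*b*al^2*x*d^2 + (2)*L^4*a*b*al^2*x^2*d^2 + (-2)*L^4*a*b*al^2*et*etp*x*d + (2)*L^4*a*b*al^2*et*etp*x^3*d + (2)*L^4*a*b*al^2*et^2*etp^2*x + (-2)*L^4*a*b*al^2*et^2*etp^2*x^2 + (-2)*L^4*a*b*al^2*et^2*etp^2*x^3 + (2)*L^4*a*b*al^2*et^2*etp^2*x^4 + (-1)*L^4*a^2*be^2*x*d^2 + (-1)*L^4*a^2*be^2*x^2*d^2 + (1)*L^4*a^2*be^2*et*etp*x*d + (-1)*L^4*a^2*be^2*et*etp*x^3*d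 + (-1)*L^4*a^2*be^2*et^2*etp^2*x + (1)*L^4*a^2*be^2*et^2*etp^2*x^2 + (1)*L^4*a^2*be^2*et^2*etp^2*x^3 + (-1)*L^4*a^2*be^2*et^2*etp^2*x^4 + (-1)*L^4*a^2*be^2*es*et*etp*ep + (3)*L^4*a^2*be^2*es*et*etp*ep*x + (-3)*L^4*a^2*be^2*es*et*etp*ep*x^2 + (1)*L^4*a^2*be^2*es*et*etp*ep*x^3 + (2)*L^4*a^2*al*be*x*d^2 + (2)*L^4*a^2*al*be*x^2*d^2 + (-2)*L^4*a^2*al*be*et*etp*x*d + (2)*L^4*a^2*al*be*et*etp*x^3*d + (2)*L^4*a^2*al*be*et^2*etp^2*x + (-2)*L^4*a^2*al*be*et^2*etp^2*x^2 + (-2)*L^4*a^2*al*be*et^2*etp^2*x^3 + (2)*L^4*a^2*al*be*et^2*etp^2*x^4 + (-1)*L^4*a^2*al^2*x*d^2 + (-1)*L^4*a^2*al^2*x^2*d^2 + (1)*L^4*a^2*al^2*et*etp*x*d + (-1)*L^4*a^2*al^2*et*etp*x^3*d + (-1)*L^4*a^2*al^2*et^2*etp^2*x + (1)*L^4*a^2*al^2*et^2*etp^2*x^2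 + (1)*L^4*a^2*al^2*et^2*etp^2*x^3 + (-1)*L^4*a^2*al^2*et^2*etp^2*x^4 + (1)*L^4*a^2*al^2*es*et*etp*ep + (-3)*L^4*a^2*al^2*es*et*etp*ep*x + (3)*L^4*a^2*al^2*es*et*etp*ep*x^2 + (-1)*L^4*a^2*al^2*es*et*etp*ep*x^3) * hd + ((-1)*L^2*et^2*etp^2 + (5)*L^2*et^2*etp^2*x + (-10)*L^2*et^2*etp^2*x^2 + (10)*L^2*et^2*etp^2*x^3 + (-5)*L^2*et^2*etp^2*x^4 + (1)*L^2*et^2*etp^2*x^5 + (-4)*L^3*b*be*et^2*etp^2 + (16)*L^3*b*be*et^2*etp^2*x + (-24)*L^3*b*be*et^2*etp^2*x^2 + (16)*L^3*b*be*et^2*etp^2*x^3 + (-4)*L^3*b*be*et^2*etp^2*x^4 + (-1)*L^3*b*be*es*et*etp*ep + (4)*L^3*b*be*es*et*etp*ep*x + (-6)*L^3*b*be*es*et*etp*ep*x^2 + (4)*L^3*b*be*es*et*etp*ep*x^3 + (-1)*L^3*b*be*es*et*etp*ep*x^4 + (3)*L^3*b*al*et^2*etp^2 + (-12)*L^3*b*al*et^2*etp^2*x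 + (18)*L^3*b*al*et^2*etp^2*x^2 + (-12)*L^3*b*al*et^2*etp^2*x^3 + (3)*L^3*b*al*et^2*etp^2*x^4 + (3)*L^3*a*be*et^2*etp^2 + (-12)*L^3*a*be*et^2*etp^2*x + (18)*L^3*a*be*et^2*etp^2*x^2 + (-12)*L^3*a*be*et^2*etp^2*x^3 + (3)*L^3*a*be*et^2*etp^2*x^4 + (-4)*L^3*a*al*et^2*etp^2 + (16)*L^3*a*al*et^2*etp^2*x + (-24)*L^3*a*al*et^2*etp^2*x^2 + (16)*L^3*a*al*et^2*etp^2*x^3 + (-4)*L^3*a*al*et^2*etp^2*x^4 + (-1)*L^3*a*al*es*et*etp*ep + (4)*L^3*a*al*es*et*etp*ep*x + (-6)*L^3*a*al*es*et*etp*ep*x^2 + (4)*L^3*a*al*es*et*etp*ep*x^3 + (-1)*L^3*a*al*es*et*etp*ep*x^4 + (-1)*L^4*b^2*be^2*et^2*etp^2 + (2)*L^4*b^2*be^2*et^2*etp^2*x + (-2)*L^4*b^2*be^2*et^2*etp^2*x^3 + (1)*L^4*b^2*be^2*et^2*etp^2*x^4 + (-2)*L^4*b^2*be^2*es*et*etp*ep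 + (6)*L^4*b^2*be^2*es*et*etp*ep*x + (-6)*L^4*b^2*be^2*es*et*etp*ep*x^2 + (2)*L^4*b^2*be^2*es*et*etp*ep*x^3 + (2)*L^4*b^2*al*be*et^2*etp^2 + (-4)*L^4*b^2*al*be*et^2*etp^2*x + (4)*L^4*b^2*al*be*et^2*etp^2*x^3 + (-2)*L^4*b^2*al*be*et^2*etp^2*x^4 + (2)*L^4*b^2*al*be*es*et*etp*ep + (-6)*L^4*b^2*al*be*es*et*etp*ep*x + (6)*L^4*b^2*al*be*es*et*etp*ep*x^2 + (-2)*L^4*b^2*al*be*es*et*etp*ep*x^3 + (-1)*L^4*b^2*al^2*et^2*etp^2 + (2)*L^4*b^2*al^2*et^2*etp^2*x + (-2)*L^4*b^2*al^2*et^2*etp^2*x^3 + (1)*L^4*b^2*al^2*et^2*etp^2*x^4 + (2)*L^4*a*b*be^2*et^2*etp^2 + (-4)*L^4*a*b*be^2*et^2*etp^2*x + (4)*L^4*a*b*be^2*et^2*etp^2*x^3 + (-2)*L^4*a*b*be^2*et^2*etp^2*x^4 + (2)*L^4*a*b*be^2*es*et*etp*ep + (-6)*L^4*a*b*be^2*es*et*etp*ep*x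 + (6)*L^4*a*b*be^2*es*et*etp*ep*x^2 + (-2)*L^4*a*b*be^2*es*et*etp*ep*x^3 + (-4)*L^4*a*b*al*be*et^2*etp^2 + (9)*L^4*a*b*al*be*et^2*etp^2*x + (-3)*L^4*a*b*al*be*et^2*etp^2*x^2 + (-5)*L^4*a*b*al*be*et^2*etp^2*x^3 + (3)*L^4*a*b*al*be*et^2*etp^2*x^4 + (-5)*L^4*a*b*al*be*es*et*etp*ep + (16)*L^4*a*b*al*be*es*et*etp*ep*x + (-18)*L^4*a*b*al*be*es*et*etp*ep*x^2 + (8)*L^4*a*b*al*be*es*et*etp*ep*x^3 + (-1)*L^4*a*b*al*be*es*et*etp*ep*x^4 + (-1)*L^4*a*b*al*be*es^2*ep^2 + (3)*L^4*a*b*al*be*es^2*ep^2*x + (-3)*L^4*a*b*al*be*es^2*ep^2*x^2 + (1)*L^4*a*b*al*be*es^2*ep^2*x^3 + (2)*L^4*a*b*al^2*et^2*etp^2 + (-4)*L^4*a*b*al^2*et^2*etp^2*x + (4)*L^4*a*b*al^2*et^2*etp^2*x^3 + (-2)*L^4*a*b*al^2*et^2*etp^2*x^4 + (2)*L^4*a*b*al^2*es*et*etp*ep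 + (-6)*L^4*a*b*al^2*es*et*etp*ep*x + (6)*L^4*a*b*al^2*es*et*etp*ep*x^2 + (-2)*L^4*a*b*al^2*es*et*etp*ep*x^3 + (-1)*L^4*a^2*be^2*et^2*etp^2 + (2)*L^4*a^2*be^2*et^2*etp^2*x + (-2)*L^4*a^2*be^2*et^2*etp^2*x^3 + (1)*L^4*a^2*be^2*et^2*etp^2*x^4 + (2)*L^4*a^2*al*be*et^2*etp^2 + (-4)*L^4*a^2*al*be*et^2*etp^2*x + (4)*L^4*a^2*al*be*et^2*etp^2*x^3 + (-2)*L^4*a^2*al*be*et^2*etp^2*x^4 + (2)*L^4*a^2*al*be*es*et*etp*ep + (-6)*L^4*a^2*al*be*es*et*etp*ep*x + (6)*L^4*a^2*al*be*es*et*etp*ep*x^2 + (-2)*L^4*a^2*al*be*es*et*etp*ep*x^3 + (-1)*L^4*a^2*al^2*et^2*etp^2 + (2)*L^4*a^2*al^2*et^2*etp^2*x + (-2)*L^4*a^2*al^2*et^2*etp^2*x^3 + (1)*L^4*a^2*al^2*et^2*etp^2*x^4 + (-2)*L^4*a^2*al^2*es*et*etp*ep + (6)*L^4*a^2*al^2*es*et*etp*ep*x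 + (-6)*L^4*a^2*al^2*es*et*etp*ep*x^2 + (2)*L^4*a^2*al^2*es*et*etp*ep*x^3) * hrel
  have h2 := mul_right_cancel₀ (pow_ne_zero 2 hd0) key2
  rw [one_sub_div hx3, div_eq_div_iff hLd hx3]
  linear_combination h2

set_option maxHeartbeats 1000000 in
/-- For distinct `z₁, z₂ ∈ ℂ` and the matrices `A, B, C` of covariances of the
planar Gaussian analytic function (with `L = π`), `A` is invertible and
`per(C - B A⁻¹ B*) / det(π A) = 1 - φ(π |z₁ - z₂|²)`. -/
theorem stmt_10 (z : Fin 2 → ℂ) (hz : z 0 ≠ z 1)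
    (A B C M : Matrix (Fin 2) (Fin 2) ℂ)
    (hA : ∀ i j, A i j = Complex.exp ((Real.pi : ℂ) * z i * (starRingEnd ℂ) (z j)))
    (hB : ∀ i j, B i j = (Real.pi : ℂ) * (starRingEnd ℂ) (z j) *
      Complex.exp ((Real.pi : ℂ) * z i * (starRingEnd ℂ) (z j)))
    (hC : ∀ i j, C i j = ((Real.pi : ℂ)^2 * z i * (starRingEnd ℂ) (z j) + (Real.pi : ℂ)) *
      Complex.exp ((Real.pi : ℂ) * z i * (starRingEnd ℂ) (z j)))
    (hM : M = C - B * A⁻¹ * B.conjTranspose) :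
    IsUnit A ∧
    (M 0 0 * M 1 1 + M 0 1 * M 1 0) / ((Real.pi : ℂ) • A).det =
      ((1 - phi (Real.pi * ‖z 0 - z 1‖^2) : ℝ) : ℂ) := by
  have hπ : (Real.pi : ℂ) ≠ 0 := by exact_mod_cast Real.pi_ne_zero
  set u : ℝ := Real.pi * ‖z 0 - z 1‖^2 with hu_def
  have hu : 0 < u := by
    have h : 0 < ‖z 0 - z 1‖ := norm_pos_iff.mpr (sub_ne_zero.mpr hz)
    rw [hu_def]; positivity
  have hUc : (u : ℂ) = (Real.pi : ℂ) * (z 0 - z 1) *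
      ((starRingEnd ℂ) (z 0) - (starRingEnd ℂ) (z 1)) := by
    have habs : (((‖z 0 - z 1‖ : ℝ) ^ 2 : ℝ) : ℂ)
        = (z 0 - z 1) * (starRingEnd ℂ) (z 0 - z 1) := by
      rw [Complex.sq_norm]; exact (Complex.mul_conj _).symm
    push_cast at habs
    rw [hu_def]; push_cast; rw [habs, map_sub]; ring
  set X : ℂ := Complex.exp ((u : ℂ)) with hX_def
  have hX0 : X ≠ 0 := Complex.exp_ne_zero _
  have hX1 : X ≠ 1 := by
    have h1 : (1:ℝ) < Real.exp u := by
      rw [← Real.exp_zero]; exact Real.exp_lt_exp.mpr hu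
    rw [hX_def, ← Complex.ofReal_exp]
    intro h
    have : Real.exp u = 1 := by exact_mod_cast h
    linarith
  have hXm1 : X - 1 ≠ 0 := sub_ne_zero.mpr hX1
  have hes0 : Complex.exp ((Real.pi : ℂ) * z 0 * (starRingEnd ℂ) (z 0)) ≠ 0 :=
    Complex.exp_ne_zero _
  have het0 : Complex.exp ((Real.pi : ℂ) * z 0 * (starRingEnd ℂ) (z 1)) ≠ 0 :=
    Complex.exp_ne_zero _
  have hetp0 : Complex.exp ((Real.pi : ℂ) * z 1 * (starRingEnd ℂ) (z 0)) ≠ 0 :=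
    Complex.exp_ne_zero _
  have hrel : Complex.exp ((Real.pi : ℂ) * z 0 * (starRingEnd ℂ) (z 0)) *
      Complex.exp ((Real.pi : ℂ) * z 1 * (starRingEnd ℂ) (z 1)) =
      Complex.exp ((Real.pi : ℂ) * z 0 * (starRingEnd ℂ) (z 1)) *
      Complex.exp ((Real.pi : ℂ) * z 1 * (starRingEnd ℂ) (z 0)) * X := by
    rw [hX_def, ← Complex.exp_add, ← Complex.exp_add, ← Complex.exp_add]
    congr 1
    rw [hUc]; ring
  have hdet : A.det = Complex.exp ((Real.pi : ℂ) * z 0 * (starRingEnd ℂ) (z 1)) *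
      Complex.exp ((Real.pi : ℂ) * z 1 * (starRingEnd ℂ) (z 0)) * (X - 1) := by
    rw [Matrix.det_fin_two, hA 0 0, hA 1 1, hA 0 1, hA 1 0]
    linear_combination hrel
  have hd0 : A.det ≠ 0 := by
    rw [hdet]
    exact mul_ne_zero (mul_ne_zero het0 hetp0) hXm1
  refine ⟨(Matrix.isUnit_iff_isUnit_det A).mpr (isUnit_iff_ne_zero.mpr hd0), ?_⟩
  have hBH : ∀ i j, B.conjTranspose i j =
      (Real.pi : ℂ) * z i * Complex.exp ((Real.pi : ℂ) * z i * (starRingEnd ℂ) (z j)) := by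
    intro i j
    have harg : (starRingEnd ℂ) ((Real.pi : ℂ) * z j * (starRingEnd ℂ) (z i)) =
        (Real.pi : ℂ) * z i * (starRingEnd ℂ) (z j) := by
      simp only [map_mul, Complex.conj_conj, Complex.conj_ofReal]; ring
    rw [Matrix.conjTranspose_apply, hB j i, Complex.star_def]
    rw [RingHom.map_mul, RingHom.map_mul, ← Complex.exp_conj, harg,
      Complex.conj_conj, Complex.conj_ofReal]
  have hAinv : A⁻¹ = (A.det)⁻¹ • A.adjugate := by
    rw [Matrix.inv_def, Ring.inverse_eq_inv]
  have hMij : ∀ i j, M i j = C i j -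
      (A.det)⁻¹ * ((B * A.adjugate * B.conjTranspose) i j) := by
    intro i j
    rw [hM, hAinv, Matrix.mul_smul, Matrix.smul_mul, Matrix.sub_apply,
      Matrix.smul_apply, smul_eq_mul]
  have hdet2 : ((Real.pi : ℂ) • A).det = (Real.pi : ℂ)^2 * A.det := by
    simp [Matrix.det_smul]
  have h1X : (1 : ℂ) - X⁻¹ ≠ 0 :=
    sub_ne_zero.mpr (by simpa [eq_comm, inv_eq_one] using hX1)
  have hRHS : ((1 - phi u : ℝ) : ℂ) =
      1 - (X^2*(-2+4*((Real.pi : ℂ) * (z 0 - z 1) *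
          ((starRingEnd ℂ) (z 0) - (starRingEnd ℂ) (z 1)))-((Real.pi : ℂ) * (z 0 - z 1) *
          ((starRingEnd ℂ) (z 0) - (starRingEnd ℂ) (z 1)))^2)
        + X*(4-4*((Real.pi : ℂ) * (z 0 - z 1) *
          ((starRingEnd ℂ) (z 0) - (starRingEnd ℂ) (z 1)))-((Real.pi : ℂ) * (z 0 - z 1) *
          ((starRingEnd ℂ) (z 0) - (starRingEnd ℂ) (z 1)))^2) - 2)/(X-1)^3 := by
    have e1 : Complex.exp (-(u:ℂ)) = X⁻¹ := by rw [hX_def, Complex.exp_neg]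
    have e2 : Complex.exp (-2*(u:ℂ)) = (X⁻¹)^2 := by
      rw [show (-2*(u:ℂ)) = -(u:ℂ) + -(u:ℂ) by ring, Complex.exp_add, e1]; ring
    have e3 : Complex.exp (-3*(u:ℂ)) = (X⁻¹)^3 := by
      rw [show (-3*(u:ℂ)) = -(u:ℂ) + (-(u:ℂ) + -(u:ℂ)) by ring, Complex.exp_add,
        Complex.exp_add, e1]; ring
    rw [← hUc]
    simp only [phi]
    push_cast
    rw [e1, e2, e3]
    congr 1
    rw [div_eq_div_iff (pow_ne_zero 3 h1X) (pow_ne_zero 3 hXm1)]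
    field_simp
  have h00 : M 0 0 * A.det = (((((Real.pi : ℂ))^2*(z 0)*((starRingEnd ℂ) (z 0))+((Real.pi : ℂ)))*(Complex.exp ((Real.pi : ℂ) * z 0 * (starRingEnd ℂ) (z 0))))*(A.det) - ((((Real.pi : ℂ))*((starRingEnd ℂ) (z 0))*(Complex.exp ((Real.pi : ℂ) * z 0 * (starRingEnd ℂ) (z 0))))*(Complex.exp ((Real.pi : ℂ) * z 1 * (starRingEnd ℂ) (z 1)))*(((Real.pi : ℂ))*(z 0)*(Complex.exp ((Real.pi : ℂ) * z 0 * (starRingEnd ℂ) (z 0)))) + (((Real.pi : ℂ))*((starRingEnd ℂ) (z 0))*(Complex.exp ((Real.pi : ℂ) * z 0 * (starRingEnd ℂ) (z 0))))*(-(Complex.exp ((Real.pi : ℂ) * z 0 * (starRingEnd ℂ) (z 1))))*(((Real.pi : ℂ))*(z 1)*(Complex.exp ((Real.pi : ℂ) * z 1 * (starRingEnd ℂ) (z 0)))) + (((Real.pi : ℂ))*((starRingEnd ℂ) (z 1))*(Complex.exp ((Real.pi : ℂ) * z 0 * (starRingEnd ℂ) (z 1))))*(-(Complex.exp ((Real.pi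 : ℂ) * z 1 * (starRingEnd ℂ) (z 0))))*(((Real.pi : ℂ))*(z 0)*(Complex.exp ((Real.pi : ℂ) * z 0 * (starRingEnd ℂ) (z 0)))) + (((Real.pi : ℂ))*((starRingEnd ℂ) (z 1))*(Complex.exp ((Real.pi : ℂ) * z 0 * (starRingEnd ℂ) (z 1))))*(Complex.exp ((Real.pi : ℂ) * z 0 * (starRingEnd ℂ) (z 0)))*(((Real.pi : ℂ))*(z 1)*(Complex.exp ((Real.pi : ℂ) * z 1 * (starRingEnd ℂ) (z 0)))))) := by
    rw [hMij 0 0]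
    simp only [Matrix.mul_apply, Fin.sum_univ_two, Matrix.adjugate_fin_two,
      Matrix.of_apply, Matrix.cons_val', Matrix.cons_val_zero, Matrix.cons_val_one,
      Matrix.head_cons, Matrix.empty_val', Matrix.cons_val_fin_one,
      Matrix.head_fin_const, hA, hB, hC, hBH]
    field_simp
    ring
  have h01 : M 0 1 * A.det = (((((Real.pi : ℂ))^2*(z 0)*((starRingEnd ℂ) (z 1))+((Real.pi : ℂ)))*(Complex.exp ((Real.pi : ℂ) * z 0 * (starRingEnd ℂ) (z 1))))*(A.det) - ((((Real.pi : ℂ))*((starRingEnd ℂ) (z 0))*(Complex.exp ((Real.pi : ℂ) * z 0 * (starRingEnd ℂ) (z 0))))*(Complex.exp ((Real.pi : ℂ) * z 1 * (starRingEnd ℂ) (z 1)))*(((Real.pi : ℂ))*(z 0)*(Complex.exp ((Real.pi : ℂ) * z 0 * (starRingEnd ℂ) (z 1)))) + (((Real.pi : ℂ))*((starRingEnd ℂ) (z 0))*(Complex.exp ((Real.pi : ℂ) * z 0 * (starRingEnd ℂ) (z 0))))*(-(Complex.exp ((Real.pi : ℂ) * z 0 * (starRingEnd ℂ) (z 1))))*(((Real.pi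 : ℂ))*(z 1)*(Complex.exp ((Real.pi : ℂ) * z 1 * (starRingEnd ℂ) (z 1)))) + (((Real.pi : ℂ))*((starRingEnd ℂ) (z 1))*(Complex.exp ((Real.pi : ℂ) * z 0 * (starRingEnd ℂ) (z 1))))*(-(Complex.exp ((Real.pi : ℂ) * z 1 * (starRingEnd ℂ) (z 0))))*(((Real.pi : ℂ))*(z 0)*(Complex.exp ((Real.pi : ℂ) * z 0 * (starRingEnd ℂ) (z 1)))) + (((Real.pi : ℂ))*((starRingEnd ℂ) (z 1))*(Complex.exp ((Real.pi : ℂ) * z 0 * (starRingEnd ℂ) (z 1))))*(Complex.exp ((Real.pi : ℂ) * z 0 * (starRingEnd ℂ) (z 0)))*(((Real.pi : ℂ))*(z 1)*(Complex.exp ((Real.pi : ℂ) * z 1 * (starRingEnd ℂ) (z 1)))))) := by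
    rw [hMij 0 1]
    simp only [Matrix.mul_apply, Fin.sum_univ_two, Matrix.adjugate_fin_two,
      Matrix.of_apply, Matrix.cons_val', Matrix.cons_val_zero, Matrix.cons_val_one,
      Matrix.head_cons, Matrix.empty_val', Matrix.cons_val_fin_one,
      Matrix.head_fin_const, hA, hB, hC, hBH]
    field_simp
    ring
  have h10 : M 1 0 * A.det = (((((Real.pi : ℂ))^2*(z 1)*((starRingEnd ℂ) (z 0))+((Real.pi : ℂ)))*(Complex.exp ((Real.pi : ℂ) * z 1 * (starRingEnd ℂ) (z 0))))*(A.det) - ((((Real.pi : ℂ))*((starRingEnd ℂ) (z 0))*(Complex.exp ((Real.pi : ℂ) * z 1 * (starRingEnd ℂ) (z 0))))*(Complex.exp ((Real.pi : ℂ) * z 1 * (starRingEnd ℂ) (z 1)))*(((Real.pi : ℂ))*(z 0)*(Complex.exp ((Real.pi : ℂ) * z 0 * (starRingEnd ℂ) (z 0)))) + (((Real.pi : ℂ))*((starRingEnd ℂ) (z 0))*(Complex.exp ((Real.pi : ℂ) * z 1 * (starRingEnd ℂ) (z 0))))*(-(Complex.exp ((Real.pi : ℂ) * z 0 * (starRingEnd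 ℂ) (z 1))))*(((Real.pi : ℂ))*(z 1)*(Complex.exp ((Real.pi : ℂ) * z 1 * (starRingEnd ℂ) (z 0)))) + (((Real.pi : ℂ))*((starRingEnd ℂ) (z 1))*(Complex.exp ((Real.pi : ℂ) * z 1 * (starRingEnd ℂ) (z 1))))*(-(Complex.exp ((Real.pi : ℂ) * z 1 * (starRingEnd ℂ) (z 0))))*(((Real.pi : ℂ))*(z 0)*(Complex.exp ((Real.pi : ℂ) * z 0 * (starRingEnd ℂ) (z 0)))) + (((Real.pi : ℂ))*((starRingEnd ℂ) (z 1))*(Complex.exp ((Real.pi : ℂ) * z 1 * (starRingEnd ℂ) (z 1))))*(Complex.exp ((Real.pi : ℂ) * z 0 * (starRingEnd ℂ) (z 0)))*(((Real.pi : ℂ))*(z 1)*(Complex.exp ((Real.pi : ℂ) * z 1 * (starRingEnd ℂ) (z 0)))))) := by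
    rw [hMij 1 0]
    simp only [Matrix.mul_apply, Fin.sum_univ_two, Matrix.adjugate_fin_two,
      Matrix.of_apply, Matrix.cons_val', Matrix.cons_val_zero, Matrix.cons_val_one,
      Matrix.head_cons, Matrix.empty_val', Matrix.cons_val_fin_one,
      Matrix.head_fin_const, hA, hB, hC, hBH]
    field_simp
    ring
  have h11 : M 1 1 * A.det = (((((Real.pi : ℂ))^2*(z 1)*((starRingEnd ℂ) (z 1))+((Real.pi : ℂ)))*(Complex.exp ((Real.pi : ℂ) * z 1 * (starRingEnd ℂ) (z 1))))*(A.det) - ((((Real.pi : ℂ))*((starRingEnd ℂ) (z 0))*(Complex.exp ((Real.pi : ℂ) * z 1 * (starRingEnd ℂ) (z 0))))*(Complex.exp ((Real.pi : ℂ) * z 1 * (starRingEnd ℂ) (z 1)))*(((Real.pi : ℂ))*(z 0)*(Complex.exp ((Real.pi : ℂ) * z 0 * (starRingEnd ℂ) (z 1)))) + (((Real.pi : ℂ))*((starRingEnd ℂ) (z 0))*(Complex.exp ((Real.pi : ℂ) * z 1 * (starRingEnd ℂ) (z 0))))*(-(Complex.exp ((Real.pi : ℂ) * z 0 * (starRingEnd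 ℂ) (z 1))))*(((Real.pi : ℂ))*(z 1)*(Complex.exp ((Real.pi : ℂ) * z 1 * (starRingEnd ℂ) (z 1)))) + (((Real.pi : ℂ))*((starRingEnd ℂ) (z 1))*(Complex.exp ((Real.pi : ℂ) * z 1 * (starRingEnd ℂ) (z 1))))*(-(Complex.exp ((Real.pi : ℂ) * z 1 * (starRingEnd ℂ) (z 0))))*(((Real.pi : ℂ))*(z 0)*(Complex.exp ((Real.pi : ℂ) * z 0 * (starRingEnd ℂ) (z 1)))) + (((Real.pi : ℂ))*((starRingEnd ℂ) (z 1))*(Complex.exp ((Real.pi : ℂ) * z 1 * (starRingEnd ℂ) (z 1))))*(Complex.exp ((Real.pi : ℂ) * z 0 * (starRingEnd ℂ) (z 0)))*(((Real.pi : ℂ))*(z 1)*(Complex.exp ((Real.pi : ℂ) * z 1 * (starRingEnd ℂ) (z 1)))))) := by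
    rw [hMij 1 1]
    simp only [Matrix.mul_apply, Fin.sum_univ_two, Matrix.adjugate_fin_two,
      Matrix.of_apply, Matrix.cons_val', Matrix.cons_val_zero, Matrix.cons_val_one,
      Matrix.head_cons, Matrix.empty_val', Matrix.cons_val_fin_one,
      Matrix.head_fin_const, hA, hB, hC, hBH]
    field_simp
    ring
  rw [hdet2, hRHS]
  exact key_scalar (Real.pi : ℂ) (z 0) (z 1) ((starRingEnd ℂ) (z 0)) ((starRingEnd ℂ) (z 1))
    (Complex.exp ((Real.pi : ℂ) * z 0 * (starRingEnd ℂ) (z 0)))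
    (Complex.exp ((Real.pi : ℂ) * z 0 * (starRingEnd ℂ) (z 1)))
    (Complex.exp ((Real.pi : ℂ) * z 1 * (starRingEnd ℂ) (z 0)))
    (Complex.exp ((Real.pi : ℂ) * z 1 * (starRingEnd ℂ) (z 1)))
    X A.det (M 0 0) (M 0 1) (M 1 0) (M 1 1)
    hπ hXm1 hd0 hrel hdet h00 h01 h10 h11
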